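/- arXiv:1712.01344 — 2 statements merged into one kernel-verified Lean document; each statement's English description precedes it below -/
import Mathlib

section
/- Let τ, ω, θ, σ, δ > 0 with ω > τ, let p, q ≥ 0, and let z ≠ 0 be real (or complex). Then the (p,q)-Mittag-Leffler function satisfies the recurrence E_{δ,θ,σ+θ; p,q}^{(1, τ+1, ω+1)}(z) = (ω/(zτ)) [ E_{δ,θ,σ; p,q}^{(1, τ, ω)}(z) − B_{p,q}(τ, ω−τ) / ([Γ(σ)]^δ B(τ, ω−τ)) ]. -/
open Real MeasureTheory Set Filter

/-- Pochhammer symbol `(a)_n = Γ(a+n)/Γ(a)`. -/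
noncomputable def poch (a : ℝ) (n : ℕ) : ℝ := Real.Gamma (a + n) / Real.Gamma a

/-- Euler beta function. -/
noncomputable def betaE (x y : ℝ) : ℝ := Real.Gamma x * Real.Gamma y / Real.Gamma (x + y)

/-- Extended beta function `B_{p,q}(x,y)`. -/
noncomputable def betaPQ (p q x y : ℝ) : ℝ :=
  ∫ t in Ioo (0:ℝ) 1, t ^ (x - 1) * (1 - t) ^ (y - 1) * Real.exp (-p / t - q / (1 - t))

/-- The `(p,q)`-Mittag-Leffler function `E_{δ,θ,σ;p,q}^{(lam,τ,ω)}(z)`. -/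
noncomputable def mlPQ (δ θ σ lam τ ω p q z : ℝ) : ℝ :=
  ∑' k : ℕ, poch lam k * betaPQ p q (τ + (k : ℝ)) (ω - τ) * z ^ k /
    (Real.Gamma (θ * (k : ℝ) + σ) ^ δ * betaE τ (ω - τ) * (Nat.factorial k : ℝ))

lemma realBeta_integrable {x y : ℝ} (hx : 0 < x) (hy : 0 < y) :
    IntegrableOn (fun t : ℝ => t ^ (x - 1) * (1 - t) ^ (y - 1)) (Ioo (0:ℝ) 1) := by
  have h := Complex.betaIntegral_convergent (u := (x:ℂ)) (v := (y:ℂ)) (by simpa) (by simpa)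
  have h2 : IntegrableOn (fun t : ℝ => (t:ℂ) ^ ((x:ℂ) - 1) * (1 - (t:ℂ)) ^ ((y:ℂ) - 1))
      (Ioo (0:ℝ) 1) := by
    have := (intervalIntegrable_iff_integrableOn_Ioc_of_le (by norm_num : (0:ℝ) ≤ 1)).mp h
    exact this.mono_set Ioo_subset_Ioc_self
  have h3 : IntegrableOn (fun t : ℝ =>
      ((t:ℂ) ^ ((x:ℂ) - 1) * (1 - (t:ℂ)) ^ ((y:ℂ) - 1)).re) (Ioo (0:ℝ) 1) := h2.re
  refine IntegrableOn.congr_fun h3 (fun t ht => ?_) measurableSet_Ioo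
  obtain ⟨ht0, ht1⟩ := ht
  have e1 : (t:ℂ) ^ ((x:ℂ) - 1) = ((t ^ (x-1) : ℝ) : ℂ) := by
    rw [Complex.ofReal_cpow ht0.le]; push_cast; ring_nf
  have e2 : (1 - (t:ℂ)) ^ ((y:ℂ) - 1) = (((1-t) ^ (y-1) : ℝ) : ℂ) := by
    rw [show (1 - (t:ℂ)) = (((1:ℝ)-t : ℝ) : ℂ) by push_cast; ring,
      Complex.ofReal_cpow (by linarith)]
    push_cast; ring_nf
  simp only [Function.comp, RCLike.re_to_complex, e1, e2, ← Complex.ofReal_mul,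
    Complex.ofReal_re]

lemma betaPQ_integrand_integrable {p q x y : ℝ} (hp : 0 ≤ p) (hq : 0 ≤ q)
    (hx : 0 < x) (hy : 0 < y) :
    IntegrableOn (fun t : ℝ => t ^ (x - 1) * (1 - t) ^ (y - 1) *
      Real.exp (-p / t - q / (1 - t))) (Ioo (0:ℝ) 1) := by
  refine Integrable.mono (realBeta_integrable hx hy) ?_ ?_
  · apply Measurable.aestronglyMeasurable
    fun_prop
  · rw [ae_restrict_iff' measurableSet_Ioo]
    filter_upwards with t ht
    obtain ⟨ht0, ht1⟩ := ht
    have h1 : (0:ℝ) ≤ t ^ (x - 1) := Real.rpow_nonneg ht0.le _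
    have h2 : (0:ℝ) ≤ (1 - t) ^ (y - 1) := Real.rpow_nonneg (by linarith) _
    have h3 : Real.exp (-p / t - q / (1 - t)) ≤ 1 := by
      rw [Real.exp_le_one_iff]
      have : -p / t ≤ 0 := div_nonpos_of_nonpos_of_nonneg (by linarith) ht0.le
      have : q / (1 - t) ≥ 0 := div_nonneg hq (by linarith)
      linarith
    rw [Real.norm_eq_abs, Real.norm_eq_abs, abs_of_nonneg (by positivity),
      abs_of_nonneg (by positivity)]
    calc t ^ (x - 1) * (1 - t) ^ (y - 1) * Real.exp (-p / t - q / (1 - t))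
        ≤ t ^ (x - 1) * (1 - t) ^ (y - 1) * 1 :=
          mul_le_mul_of_nonneg_left h3 (by positivity)
      _ = t ^ (x - 1) * (1 - t) ^ (y - 1) := mul_one _

lemma betaPQ_nonneg (p q x y : ℝ) : 0 ≤ betaPQ p q x y := by
  refine setIntegral_nonneg measurableSet_Ioo (fun t ht => ?_)
  obtain ⟨ht0, ht1⟩ := ht
  have h1 : (0:ℝ) ≤ t ^ (x - 1) := Real.rpow_nonneg ht0.le _
  have h2 : (0:ℝ) ≤ (1 - t) ^ (y - 1) := Real.rpow_nonneg (by linarith) _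
  positivity

lemma betaPQ_succ_le {p q x y : ℝ} (hp : 0 ≤ p) (hq : 0 ≤ q) (hx : 0 < x) (hy : 0 < y) :
    betaPQ p q (x + 1) y ≤ betaPQ p q x y := by
  refine setIntegral_mono_on
    (betaPQ_integrand_integrable hp hq (by linarith) hy)
    (betaPQ_integrand_integrable hp hq hx hy) measurableSet_Ioo (fun t ht => ?_)
  obtain ⟨ht0, ht1⟩ := ht
  have h2 : (0:ℝ) ≤ (1 - t) ^ (y - 1) := Real.rpow_nonneg (by linarith) _
  have h1 : t ^ (x + 1 - 1) ≤ t ^ (x - 1) :=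
    Real.rpow_le_rpow_of_exponent_ge ht0 ht1.le (by linarith)
  have := Real.exp_pos (-p / t - q / (1 - t))
  gcongr

lemma gamma_ratio {θ : ℝ} (hθ : 0 < θ) {x : ℝ} (hx : 2 ≤ x) :
    Real.Gamma x * (x - 1) ^ θ ≤ Real.Gamma (x + θ) := by
  have hx1 : (0:ℝ) < x - 1 := by linarith
  have hG1 : 0 < Real.Gamma (x - 1) := Real.Gamma_pos_of_pos hx1
  have hGx : 0 < Real.Gamma x := Real.Gamma_pos_of_pos (by linarith)
  have hGxt : 0 < Real.Gamma (x + θ) := Real.Gamma_pos_of_pos (by linarith)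
  have hslope := convexOn_log_Gamma.slope_mono_adjacent
    (x := x - 1) (y := x) (z := x + θ)
    (mem_Ioi.mpr hx1) (mem_Ioi.mpr (by linarith)) (by linarith) (by linarith)
  have hrec : Real.Gamma x = (x - 1) * Real.Gamma (x - 1) := by
    have := Real.Gamma_add_one (s := x - 1) (ne_of_gt hx1)
    rw [sub_add_cancel] at this
    exact this
  have hlog : (Real.log ∘ Real.Gamma) x - (Real.log ∘ Real.Gamma) (x - 1)
      = Real.log (x - 1) := by
    simp only [Function.comp]
    rw [hrec, Real.log_mul (ne_of_gt hx1) (ne_of_gt hG1)]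
    ring
  rw [hlog] at hslope
  have h1 : Real.log (x - 1) / (x - (x - 1)) = Real.log (x - 1) := by
    norm_num
  rw [h1] at hslope
  have h2 : x + θ - x = θ := by ring
  rw [h2] at hslope
  have h3 : θ * Real.log (x - 1) + Real.log (Real.Gamma x) ≤ Real.log (Real.Gamma (x + θ)) := by
    rw [le_div_iff₀ hθ] at hslope
    simp only [Function.comp] at hslope
    nlinarith
  have h4 : Real.Gamma x * (x - 1) ^ θ
      = Real.exp (θ * Real.log (x - 1) + Real.log (Real.Gamma x)) := by
    rw [Real.exp_add, Real.rpow_def_of_pos hx1, Real.exp_log hGx]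
    ring
  rw [h4, ← Real.exp_log hGxt]
  exact Real.exp_le_exp.mpr h3

lemma summable_F (τ ω θ σ δ p q z : ℝ)
    (hτ : 0 < τ) (hθ : 0 < θ) (hσ : 0 < σ) (hδ : 0 < δ) (hτω : τ < ω)
    (hp : 0 ≤ p) (hq : 0 ≤ q) (hz : z ≠ 0) :
    Summable (fun k : ℕ => betaPQ p q (τ + (k : ℝ)) (ω - τ) * z ^ k /
      (Real.Gamma (θ * (k : ℝ) + σ) ^ δ * betaE τ (ω - τ))) := by
  have hzpos : (0:ℝ) < |z| := abs_pos.mpr hz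
  have hc : 0 < betaE τ (ω - τ) := by
    unfold betaE
    have h1 := Real.Gamma_pos_of_pos hτ
    have h2 := Real.Gamma_pos_of_pos (by linarith : (0:ℝ) < ω - τ)
    have h3 := Real.Gamma_pos_of_pos (show (0:ℝ) < τ + (ω - τ) by linarith)
    positivity
  set c := betaE τ (ω - τ) with hcdef
  set M : ℝ := (2 * |z|) ^ (1/δ) with hMdef
  have hM : 0 < M := Real.rpow_pos_of_pos (by positivity) _
  -- choose N
  obtain ⟨N, hN⟩ := exists_nat_ge ((max 2 (1 + M ^ (1/θ)) - σ) / θ)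
  refine summable_of_ratio_norm_eventually_le (r := 1/2) (by norm_num) ?_
  filter_upwards [eventually_ge_atTop N] with k hk
  set x : ℝ := θ * (k : ℝ) + σ with hxdef
  have hxge : max 2 (1 + M ^ (1/θ)) ≤ x := by
    have h1 : ((max 2 (1 + M ^ (1/θ)) - σ) / θ) ≤ (k : ℝ) := le_trans hN (by exact_mod_cast hk)
    rw [div_le_iff₀ hθ] at h1
    simp only [hxdef]
    nlinarith
  have hx2 : (2:ℝ) ≤ x := le_trans (le_max_left _ _) hxge
  have hxM : M ^ (1/θ) ≤ x - 1 := by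
    have := le_trans (le_max_right _ _) hxge; linarith
  have hGx : 0 < Real.Gamma x := Real.Gamma_pos_of_pos (by linarith)
  have hGx' : 0 < Real.Gamma (x + θ) := Real.Gamma_pos_of_pos (by linarith)
  -- Gamma ratio bound
  have hratio : M * Real.Gamma x ≤ Real.Gamma (x + θ) := by
    have h1 := gamma_ratio hθ hx2
    have h2 : M ≤ (x - 1) ^ θ := by
      have h3 : (M ^ (1/θ)) ^ θ ≤ (x - 1) ^ θ :=
        Real.rpow_le_rpow (Real.rpow_nonneg hM.le _) hxM hθ.le
      rw [← Real.rpow_mul hM.le, one_div, inv_mul_cancel₀ (ne_of_gt hθ),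
        Real.rpow_one] at h3
      exact h3
    nlinarith
  -- raise to power δ
  have hpow : 2 * |z| * Real.Gamma x ^ δ ≤ Real.Gamma (x + θ) ^ δ := by
    have h1 : (M * Real.Gamma x) ^ δ ≤ Real.Gamma (x + θ) ^ δ :=
      Real.rpow_le_rpow (by positivity) hratio hδ.le
    rw [Real.mul_rpow hM.le hGx.le] at h1
    have h2 : M ^ δ = 2 * |z| := by
      rw [hMdef, ← Real.rpow_mul (by positivity), one_div,
        inv_mul_cancel₀ (ne_of_gt hδ), Real.rpow_one]
    rw [h2] at h1
    exact h1
  -- beta bound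
  have hB : betaPQ p q (τ + ((k+1 : ℕ) : ℝ)) (ω - τ) ≤ betaPQ p q (τ + (k : ℝ)) (ω - τ) := by
    have h1 : τ + ((k+1 : ℕ) : ℝ) = (τ + (k:ℝ)) + 1 := by push_cast; ring
    rw [h1]
    exact betaPQ_succ_le hp hq (by positivity) (by linarith)
  have hBnn := betaPQ_nonneg p q (τ + (k : ℝ)) (ω - τ)
  have hBnn' := betaPQ_nonneg p q (τ + ((k+1 : ℕ) : ℝ)) (ω - τ)
  have hGxd : 0 < Real.Gamma x ^ δ := Real.rpow_pos_of_pos hGx _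
  have hGxd' : 0 < Real.Gamma (x + θ) ^ δ := Real.rpow_pos_of_pos hGx' _
  have hx' : θ * ((k+1 : ℕ) : ℝ) + σ = x + θ := by rw [hxdef]; push_cast; ring
  rw [hx']
  simp only [Real.norm_eq_abs, abs_div, abs_mul, abs_pow, abs_of_nonneg hBnn,
    abs_of_nonneg hBnn', abs_of_pos hGxd, abs_of_pos hGxd', abs_of_pos hc]
  have key : betaPQ p q (τ + ((k+1 : ℕ) : ℝ)) (ω - τ) * |z| ^ (k+1) /
      (Real.Gamma (x + θ) ^ δ * c) ≤
      betaPQ p q (τ + (k : ℝ)) (ω - τ) * (|z| ^ k * |z|) /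
      (2 * |z| * (Real.Gamma x ^ δ * c)) := by
    apply div_le_div₀ (by positivity)
    · rw [pow_succ]
      exact mul_le_mul_of_nonneg_right hB (by positivity)
    · positivity
    · calc 2 * |z| * (Real.Gamma x ^ δ * c) = (2 * |z| * Real.Gamma x ^ δ) * c := by ring
        _ ≤ Real.Gamma (x + θ) ^ δ * c := mul_le_mul_of_nonneg_right hpow hc.le
  refine le_trans key (le_of_eq ?_)
  field_simp

lemma summand_eq (τ ω θ σ δ p q z : ℝ) (hτ : 0 < τ) (hσ : 0 < σ) (hτω : τ < ω) (k : ℕ) :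
    poch 1 k * betaPQ p q (τ + (k : ℝ)) (ω - τ) * z ^ k /
      (Real.Gamma (θ * (k : ℝ) + σ) ^ δ * betaE τ (ω - τ) * (Nat.factorial k : ℝ)) =
    betaPQ p q (τ + (k : ℝ)) (ω - τ) * z ^ k /
      (Real.Gamma (θ * (k : ℝ) + σ) ^ δ * betaE τ (ω - τ)) := by
  have hpoch : poch 1 k = (Nat.factorial k : ℝ) := by
    unfold poch
    rw [show (1:ℝ) + (k:ℝ) = (k:ℝ) + 1 by ring, Real.Gamma_nat_eq_factorial,
      Real.Gamma_one, div_one]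
  have hfac : ((Nat.factorial k : ℝ)) ≠ 0 := by positivity
  rw [hpoch]
  rw [mul_comm (Real.Gamma (θ * (k : ℝ) + σ) ^ δ * betaE τ (ω - τ)) ((Nat.factorial k : ℝ))]
  rw [show ((Nat.factorial k : ℝ)) * betaPQ p q (τ + (k : ℝ)) (ω - τ) * z ^ k
      = ((Nat.factorial k : ℝ)) * (betaPQ p q (τ + (k : ℝ)) (ω - τ) * z ^ k) by ring]
  rw [mul_div_mul_left _ _ hfac]

theorem statement11 (τ ω θ σ δ p q z : ℝ)
    (hτ : 0 < τ) (hω : 0 < ω) (hθ : 0 < θ) (hσ : 0 < σ) (hδ : 0 < δ) (hτω : τ < ω)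
    (hp : 0 ≤ p) (hq : 0 ≤ q) (hz : z ≠ 0) :
    mlPQ δ θ (σ + θ) 1 (τ + 1) (ω + 1) p q z =
      ω / (z * τ) *
        (mlPQ δ θ σ 1 τ ω p q z -
          betaPQ p q τ (ω - τ) / (Real.Gamma σ ^ δ * betaE τ (ω - τ))) := by
  have hGτ : 0 < Real.Gamma τ := Real.Gamma_pos_of_pos hτ
  have hGω : 0 < Real.Gamma ω := Real.Gamma_pos_of_pos hω
  have hGωτ : 0 < Real.Gamma (ω - τ) := Real.Gamma_pos_of_pos (by linarith)
  have hc : 0 < betaE τ (ω - τ) := by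
    unfold betaE
    rw [show τ + (ω - τ) = ω by ring]
    positivity
  set F : ℕ → ℝ := fun k => betaPQ p q (τ + (k : ℝ)) (ω - τ) * z ^ k /
      (Real.Gamma (θ * (k : ℝ) + σ) ^ δ * betaE τ (ω - τ)) with hFdef
  have hS : Summable F := summable_F τ ω θ σ δ p q z hτ hθ hσ hδ hτω hp hq hz
  -- RHS series
  have hml : mlPQ δ θ σ 1 τ ω p q z = ∑' k, F k :=
    tsum_congr (fun k => summand_eq τ ω θ σ δ p q z hτ hσ hτω k)
  -- LHS series, termwise
  have hterm : ∀ j : ℕ,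
      poch 1 j * betaPQ p q ((τ+1) + (j : ℝ)) ((ω+1) - (τ+1)) * z ^ j /
        (Real.Gamma (θ * (j : ℝ) + (σ + θ)) ^ δ * betaE (τ+1) ((ω+1) - (τ+1)) *
          (Nat.factorial j : ℝ)) = (ω / (z * τ)) * F (j+1) := by
    intro j
    have hpoch : poch 1 j = (Nat.factorial j : ℝ) := by
      unfold poch
      rw [show (1:ℝ) + (j:ℝ) = (j:ℝ) + 1 by ring, Real.Gamma_nat_eq_factorial,
        Real.Gamma_one, div_one]
    have e0 : (ω+1) - (τ+1) = ω - τ := by ring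
    have e1 : (τ+1) + (j : ℝ) = τ + ((j+1 : ℕ) : ℝ) := by push_cast; ring
    have e2 : θ * (j : ℝ) + (σ + θ) = θ * ((j+1 : ℕ) : ℝ) + σ := by push_cast; ring
    have e3 : betaE (τ+1) (ω - τ) = τ / ω * betaE τ (ω - τ) := by
      unfold betaE
      rw [show τ + 1 + (ω - τ) = ω + 1 by ring,
        Real.Gamma_add_one (ne_of_gt hτ), Real.Gamma_add_one (ne_of_gt hω),
        show τ + (ω - τ) = ω by ring]
      field_simp
    rw [hpoch, e0, e1, e2, e3, hFdef]
    have hG : 0 < Real.Gamma (θ * ((j+1 : ℕ) : ℝ) + σ) ^ δ :=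
      Real.rpow_pos_of_pos (Real.Gamma_pos_of_pos (by positivity)) _
    have hfac : ((Nat.factorial j : ℝ)) ≠ 0 := by positivity
    field_simp
    ring
  -- compute
  have hLHS : mlPQ δ θ (σ + θ) 1 (τ + 1) (ω + 1) p q z
      = (ω / (z * τ)) * ∑' j, F (j+1) := by
    unfold mlPQ
    rw [tsum_congr hterm, tsum_mul_left]
  have hshift : ∑' k, F k = F 0 + ∑' j, F (j+1) := Summable.tsum_eq_zero_add hS
  have hF0 : F 0 = betaPQ p q τ (ω - τ) / (Real.Gamma σ ^ δ * betaE τ (ω - τ)) := by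
    simp [hFdef]
  rw [hLHS, hml, ← hF0]
  rw [show ∑' j, F (j+1) = (F 0 + ∑' j, F (j+1)) - F 0 by ring, ← hshift]
end

section
/- Let r, α, β, γ, ν, μ, τ, ω, θ, σ > 0 with ω > τ and γ(μα − β) > 0, let p, q ≥ 0, and let z be real with |z| ≤ 1. Then the (p,q)-Mathieu-type series with the sequence a_k = [Γ(θk+σ)]^γ is the beta-type integral transform of the classical generalized Mathieu-type power series: S_{μ,ν,τ,ω}^{(α,β)}(r; {[Γ(θk+σ)]^γ}; p,q; z) = (1/B(τ, ω−τ)) ∫₀¹ t^{τ−1} (1−t)^{ω−τ−1} exp(−p/t − q/(1−t)) · S_{μ,ν}^{(α,β)}(r; {[Γ(θk+σ)]^γ}; zt) dt. -/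
open Real MeasureTheory Set Filter

/-- The `(p,q)`-Mathieu-type power series attached to the sequence `a`. -/
noncomputable def mathieuPQ (μ ν τ ω α β r p q z : ℝ) (a : ℕ → ℝ) : ℝ :=
  ∑' n : ℕ, 2 * a (n + 1) ^ β * poch ν (n + 1) *
      betaPQ p q (τ + ((n : ℝ) + 1)) (ω - τ) * z ^ (n + 1) /
    ((Nat.factorial (n + 1) : ℝ) * betaE τ (ω - τ) * (a (n + 1) ^ α + r ^ 2) ^ μ)

/-- Generalized Mathieu-type power series `S_{μ,ν}^{(α,β)}(r; a; w)`. -/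
noncomputable def mathieuC (μ ν α β r w : ℝ) (a : ℕ → ℝ) : ℝ :=
  ∑' n : ℕ, 2 * a (n + 1) ^ β * poch ν (n + 1) * w ^ (n + 1) /
    ((Nat.factorial (n + 1) : ℝ) * (a (n + 1) ^ α + r ^ 2) ^ μ)

lemma aux_Gamma_mul_rpow_le {x θ : ℝ} (hθ : 0 < θ) (hx : 2 ≤ x) :
    Real.Gamma x * (x - 1) ^ θ ≤ Real.Gamma (x + θ) := by
  have h1 : (0:ℝ) < x - 1 := by linarith
  have hx0 : (0:ℝ) < x := by linarith
  have hxθ : (0:ℝ) < x + θ := by linarith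
  have key := Real.convexOn_log_Gamma.slope_mono_adjacent (Set.mem_Ioi.mpr h1)
      (Set.mem_Ioi.mpr hxθ) (by linarith : x - 1 < x) (by linarith : x < x + θ)
  simp only [Function.comp] at key
  have hΓ1 : Real.Gamma x = (x - 1) * Real.Gamma (x - 1) := by
    have h := Real.Gamma_add_one h1.ne'
    rw [sub_add_cancel] at h
    exact h
  have hlog : Real.log (Real.Gamma x) - Real.log (Real.Gamma (x - 1)) = Real.log (x - 1) := by
    rw [hΓ1, Real.log_mul h1.ne' (Real.Gamma_pos_of_pos h1).ne']; ring
  rw [show x - (x - 1) = 1 by ring, show x + θ - x = θ by ring, div_one, hlog] at key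
  have h2 : Real.log (x - 1) * θ ≤ Real.log (Real.Gamma (x + θ)) - Real.log (Real.Gamma x) :=
    (le_div_iff₀ hθ).mp key
  calc Real.Gamma x * (x - 1) ^ θ
      = Real.exp (Real.log (Real.Gamma x) + Real.log (x - 1) * θ) := by
        rw [Real.exp_add, Real.exp_log (Real.Gamma_pos_of_pos hx0),
          Real.rpow_def_of_pos h1]
    _ ≤ Real.exp (Real.log (Real.Gamma (x + θ))) := Real.exp_le_exp.mpr (by linarith)
    _ = Real.Gamma (x + θ) := Real.exp_log (Real.Gamma_pos_of_pos hxθ)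

lemma aux_beta_integrable {u v : ℝ} (hu : 0 < u) (hv : 0 < v) :
    IntegrableOn (fun t : ℝ => t ^ (u - 1) * (1 - t) ^ (v - 1)) (Set.Ioo 0 1) := by
  have h := (Complex.betaIntegral_convergent (u := (u:ℂ)) (v := (v:ℂ))
    (by simpa using hu) (by simpa using hv)).norm
  rw [intervalIntegrable_iff_integrableOn_Ioc_of_le zero_le_one] at h
  refine (h.mono_set Set.Ioo_subset_Ioc_self).congr_fun ?_ measurableSet_Ioo
  intro t ht
  simp only []
  have ht0 : (0:ℝ) < t := ht.1
  have ht1 : (0:ℝ) < 1 - t := by linarith [ht.2]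
  have e1 : ((1:ℂ) - (t:ℂ)) = ((1 - t : ℝ) : ℂ) := by push_cast; ring
  show ‖(t:ℂ) ^ ((u:ℂ) - 1) * (1 - (t:ℂ)) ^ ((v:ℂ) - 1)‖ = _
  rw [norm_mul, e1,
    Complex.norm_cpow_eq_rpow_re_of_pos ht0, Complex.norm_cpow_eq_rpow_re_of_pos ht1]
  norm_num

lemma aux_summable {ν θ σ ε : ℝ} (hν : 0 < ν) (hθ : 0 < θ) (hσ : 0 < σ) (hε : 0 < ε) :
    Summable (fun n : ℕ => Real.Gamma (ν + (n:ℝ) + 1) / (Nat.factorial (n+1) : ℝ) *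
      Real.Gamma (θ * ((n:ℝ) + 1) + σ) ^ (-ε)) := by
  set b : ℕ → ℝ := fun n => Real.Gamma (ν + (n:ℝ) + 1) / (Nat.factorial (n+1) : ℝ) *
      Real.Gamma (θ * ((n:ℝ) + 1) + σ) ^ (-ε) with hb
  have hbpos : ∀ n : ℕ, 0 < b n := by
    intro n
    have h1 : 0 < Real.Gamma (ν + (n:ℝ) + 1) := Real.Gamma_pos_of_pos (by positivity)
    have h2 : 0 < Real.Gamma (θ * ((n:ℝ) + 1) + σ) := Real.Gamma_pos_of_pos (by positivity)
    have h3 : (0:ℝ) < (Nat.factorial (n+1) : ℝ) := by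
      exact_mod_cast Nat.factorial_pos (n+1)
    exact mul_pos (div_pos h1 h3) (Real.rpow_pos_of_pos h2 _)
  apply summable_of_ratio_norm_eventually_le (show (1:ℝ)/2 < 1 by norm_num)
  have htend : Tendsto (fun n : ℕ => θ * ((n:ℝ) + 1) + σ) atTop atTop := by
    have h1 : Tendsto (fun x : ℝ => θ * (x + 1) + σ) atTop atTop := by
      apply tendsto_atTop_add_const_right
      exact (tendsto_atTop_add_const_right _ 1 tendsto_id).const_mul_atTop hθ
    exact h1.comp tendsto_natCast_atTop_atTop
  have hθε : 0 < θ * ε := mul_pos hθ hε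
  filter_upwards [htend.eventually_ge_atTop (max 2 (1 + (2*(ν+1)) ^ (θ*ε)⁻¹))] with n hn
  set x : ℝ := θ * ((n:ℝ) + 1) + σ with hxdef
  have hx2 : 2 ≤ x := le_trans (le_max_left _ _) hn
  have hxM : 1 + (2*(ν+1)) ^ (θ*ε)⁻¹ ≤ x := le_trans (le_max_right _ _) hn
  have hx1 : (0:ℝ) < x - 1 := by linarith
  have hMpos : (0:ℝ) < (2*(ν+1)) ^ (θ*ε)⁻¹ := Real.rpow_pos_of_pos (by linarith) _
  have h5 : 2*(ν+1) ≤ (x-1) ^ (θ*ε) := by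
    calc 2*(ν+1) = ((2*(ν+1)) ^ (θ*ε)⁻¹) ^ (θ*ε) := by
          rw [← Real.rpow_mul (by linarith : (0:ℝ) ≤ 2*(ν+1)), inv_mul_cancel₀ hθε.ne',
            Real.rpow_one]
      _ ≤ (x-1) ^ (θ*ε) := Real.rpow_le_rpow hMpos.le (by linarith) hθε.le
  have hgam : Real.Gamma x * (x-1) ^ θ ≤ Real.Gamma (x + θ) := aux_Gamma_mul_rpow_le hθ hx2
  have hGx : 0 < Real.Gamma x := Real.Gamma_pos_of_pos (by linarith)
  have hR : 0 < (x-1) ^ θ := Real.rpow_pos_of_pos hx1 θ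
  have hcomb : Real.Gamma (x+θ) ^ (-ε) ≤ Real.Gamma x ^ (-ε) * (2*(ν+1))⁻¹ := by
    have h6 : Real.Gamma (x+θ) ^ (-ε) ≤ (Real.Gamma x * (x-1)^θ) ^ (-ε) :=
      Real.rpow_le_rpow_of_nonpos (mul_pos hGx hR) hgam (by linarith)
    have h7 : (Real.Gamma x * (x-1)^θ) ^ (-ε) = Real.Gamma x ^ (-ε) * ((x-1)^θ) ^ (-ε) :=
      Real.mul_rpow hGx.le hR.le
    have h8 : ((x-1)^θ) ^ (-ε) = (x-1) ^ (-(θ*ε)) := by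
      rw [← Real.rpow_mul hx1.le, mul_neg]
    have h9 : (x-1) ^ (-(θ*ε)) ≤ (2*(ν+1))⁻¹ := by
      rw [Real.rpow_neg hx1.le]
      exact inv_anti₀ (by linarith) h5
    calc Real.Gamma (x+θ) ^ (-ε) ≤ Real.Gamma x ^ (-ε) * ((x-1)^θ) ^ (-ε) := by
          rw [← h7]; exact h6
      _ = Real.Gamma x ^ (-ε) * (x-1) ^ (-(θ*ε)) := by rw [h8]
      _ ≤ Real.Gamma x ^ (-ε) * (2*(ν+1))⁻¹ :=
          mul_le_mul_of_nonneg_left h9 (Real.rpow_pos_of_pos hGx _).le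
  -- now the ratio bound
  rw [Real.norm_eq_abs, Real.norm_eq_abs, abs_of_pos (hbpos (n+1)), abs_of_pos (hbpos n)]
  have hP : 0 < Real.Gamma (ν + (n:ℝ) + 1) := Real.Gamma_pos_of_pos (by positivity)
  have hF : (0:ℝ) < (Nat.factorial (n+1) : ℝ) := by exact_mod_cast Nat.factorial_pos (n+1)
  have hGxe : 0 < Real.Gamma x ^ (-ε) := Real.rpow_pos_of_pos hGx _
  have ecast : ((n+1 : ℕ) : ℝ) = (n:ℝ) + 1 := by push_cast; ring
  have e1 : Real.Gamma (ν + ((n:ℝ)+1) + 1) = (ν + (n:ℝ) + 1) * Real.Gamma (ν + (n:ℝ) + 1) := by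
    rw [show ν + ((n:ℝ)+1) + 1 = (ν + (n:ℝ) + 1) + 1 by ring]
    exact Real.Gamma_add_one (by positivity)
  have e2 : (Nat.factorial (n+1+1) : ℝ) = ((n:ℝ)+2) * (Nat.factorial (n+1) : ℝ) := by
    rw [Nat.factorial_succ]; push_cast; ring
  have e3 : θ * (((n:ℝ)+1) + 1) + σ = x + θ := by rw [hxdef]; ring
  have hb1 : b (n+1) = ((ν + (n:ℝ) + 1) * Real.Gamma (ν + (n:ℝ) + 1)) /
      (((n:ℝ)+2) * (Nat.factorial (n+1) : ℝ)) * Real.Gamma (x + θ) ^ (-ε) := by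
    rw [hb]
    simp only [ecast]
    rw [e1, e2, e3]
  rw [hb1, hb]
  simp only []
  calc ((ν + (n:ℝ) + 1) * Real.Gamma (ν + (n:ℝ) + 1)) /
        (((n:ℝ)+2) * (Nat.factorial (n+1) : ℝ)) * Real.Gamma (x + θ) ^ (-ε)
      ≤ ((ν + (n:ℝ) + 1) * Real.Gamma (ν + (n:ℝ) + 1)) /
        (((n:ℝ)+2) * (Nat.factorial (n+1) : ℝ)) * (Real.Gamma x ^ (-ε) * (2*(ν+1))⁻¹) := by
        apply mul_le_mul_of_nonneg_left hcomb
        have : (0:ℝ) < ((n:ℝ)+2) * (Nat.factorial (n+1) : ℝ) := by positivity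
        exact (div_nonneg (by positivity) this.le)
    _ = (ν + (n:ℝ) + 1) * (((n:ℝ)+2) * (2*(ν+1)))⁻¹ *
        (Real.Gamma (ν + (n:ℝ) + 1) / (Nat.factorial (n+1) : ℝ) * Real.Gamma x ^ (-ε)) := by
        field_simp
    _ ≤ 1/2 * (Real.Gamma (ν + (n:ℝ) + 1) / (Nat.factorial (n+1) : ℝ) *
        Real.Gamma x ^ (-ε)) := by
        apply mul_le_mul_of_nonneg_right
        · rw [mul_inv_le_iff₀ (by positivity)]
          nlinarith [hν.le, (Nat.cast_nonneg n : (0:ℝ) ≤ n)]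
        · exact mul_nonneg (div_nonneg hP.le hF.le) hGxe.le

theorem statement17 (r α β γ ν μ τ ω θ σ p q z : ℝ)
    (hr : 0 < r) (hα : 0 < α) (hβ : 0 < β) (hγ : 0 < γ) (hν : 0 < ν) (hμ : 0 < μ)
    (hτ : 0 < τ) (hω : 0 < ω) (hθ : 0 < θ) (hσ : 0 < σ) (hτω : τ < ω)
    (hexp : 0 < γ * (μ * α - β)) (hp : 0 ≤ p) (hq : 0 ≤ q) (hz : |z| ≤ 1) :
    mathieuPQ μ ν τ ω α β r p q z (fun k => Real.Gamma (θ * (k : ℝ) + σ) ^ γ) =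
      (1 / betaE τ (ω - τ)) *
        ∫ t in Ioo (0:ℝ) 1, t ^ (τ - 1) * (1 - t) ^ (ω - τ - 1) *
          Real.exp (-p / t - q / (1 - t)) *
          mathieuC μ ν α β r (z * t) (fun k => Real.Gamma (θ * (k : ℝ) + σ) ^ γ) := by
  have hε : 0 < γ * (μ * α - β) := hexp
  set K : ℕ → ℝ := fun n =>
    2 * (Real.Gamma (θ * ((n:ℝ) + 1) + σ) ^ γ) ^ β * poch ν (n + 1) /
      ((Nat.factorial (n + 1) : ℝ) * ((Real.Gamma (θ * ((n:ℝ) + 1) + σ) ^ γ) ^ α + r ^ 2) ^ μ)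
    with hKdef
  set g : ℕ → ℝ → ℝ := fun n t =>
    K n * (z * t) ^ (n + 1) *
      (t ^ (τ - 1) * (1 - t) ^ (ω - τ - 1) * Real.exp (-p / t - q / (1 - t))) with hgdef
  have hGa : ∀ n : ℕ, 0 < Real.Gamma (θ * ((n:ℝ) + 1) + σ) := fun n =>
    Real.Gamma_pos_of_pos (by positivity)
  have hpoch : ∀ n : ℕ, 0 < poch ν (n + 1) := fun n =>
    div_pos (Real.Gamma_pos_of_pos (by positivity)) (Real.Gamma_pos_of_pos hν)
  have hfact : ∀ n : ℕ, (0:ℝ) < (Nat.factorial (n + 1) : ℝ) := fun n => by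
    exact_mod_cast Nat.factorial_pos (n + 1)
  have hDpos : ∀ n : ℕ, (0:ℝ) < (Real.Gamma (θ * ((n:ℝ) + 1) + σ) ^ γ) ^ α + r ^ 2 := by
    intro n
    have h1 : (0:ℝ) ≤ (Real.Gamma (θ * ((n:ℝ) + 1) + σ) ^ γ) ^ α :=
      Real.rpow_nonneg (Real.rpow_nonneg (hGa n).le _) _
    nlinarith [sq_nonneg r, hr]
  have hKpos : ∀ n : ℕ, 0 < K n := by
    intro n
    apply div_pos
    · exact mul_pos (mul_pos two_pos
        (Real.rpow_pos_of_pos (Real.rpow_pos_of_pos (hGa n) _) _)) (hpoch n)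
    · exact mul_pos (hfact n) (Real.rpow_pos_of_pos (hDpos n) _)
  -- summability of K
  have hsumK : Summable K := by
    have hb := aux_summable hν hθ hσ hε
    apply Summable.of_nonneg_of_le (fun n => (hKpos n).le) ?_ (hb.mul_left (2 / Real.Gamma ν))
    intro n
    have hG := hGa n
    set G : ℝ := Real.Gamma (θ * ((n:ℝ) + 1) + σ) with hGdef
    have hA : (G ^ γ) ^ β = G ^ (γ * β) := (Real.rpow_mul hG.le γ β).symm
    have hB : ((G ^ γ) ^ α) ^ μ = G ^ (γ * α * μ) := by
      rw [← Real.rpow_mul hG.le γ α, ← Real.rpow_mul hG.le (γ * α) μ]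
    have hDle : G ^ (γ * α * μ) ≤ ((G ^ γ) ^ α + r ^ 2) ^ μ := by
      rw [← hB]
      exact Real.rpow_le_rpow (Real.rpow_nonneg (Real.rpow_nonneg hG.le _) _)
        (by nlinarith [sq_nonneg r]) hμ.le
    have hnum : (0:ℝ) ≤ 2 * (G ^ γ) ^ β * poch ν (n + 1) :=
      (mul_pos (mul_pos two_pos (Real.rpow_pos_of_pos (Real.rpow_pos_of_pos hG _) _))
        (hpoch n)).le
    have hden : (0:ℝ) < (Nat.factorial (n + 1) : ℝ) * G ^ (γ * α * μ) :=
      mul_pos (hfact n) (Real.rpow_pos_of_pos hG _)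
    calc K n ≤ 2 * (G ^ γ) ^ β * poch ν (n + 1) /
          ((Nat.factorial (n + 1) : ℝ) * G ^ (γ * α * μ)) := by
          rw [hKdef]
          exact div_le_div_of_nonneg_left hnum hden
            (mul_le_mul_of_nonneg_left hDle (hfact n).le)
      _ = 2 / Real.Gamma ν * (Real.Gamma (ν + (n:ℝ) + 1) / (Nat.factorial (n + 1) : ℝ) *
          G ^ (-(γ * (μ * α - β)))) := by
          have hsub : G ^ (-(γ * (μ * α - β))) = G ^ (γ * β) / G ^ (γ * α * μ) := by
            rw [← Real.rpow_sub hG]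
            congr 1
            ring
          rw [hsub, hA, poch, show ((n + 1 : ℕ) : ℝ) = (n:ℝ) + 1 by push_cast; ring]
          have h1 : Real.Gamma ν ≠ 0 := (Real.Gamma_pos_of_pos hν).ne'
          have h2 : (Nat.factorial (n + 1) : ℝ) ≠ 0 := (hfact n).ne'
          have h3 : G ^ (γ * α * μ) ≠ 0 := (Real.rpow_pos_of_pos hG _).ne'
          rw [show ν + ((n:ℝ) + 1) = ν + (n:ℝ) + 1 by ring]
          field_simp
  -- measurability
  have hmeas : ∀ n : ℕ, AEStronglyMeasurable (g n) (volume.restrict (Ioo (0:ℝ) 1)) := by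
    intro n
    apply Measurable.aestronglyMeasurable
    simp only [hgdef]
    fun_prop
  -- beta integrability
  have hbeta : IntegrableOn (fun t : ℝ => t ^ (τ - 1) * (1 - t) ^ (ω - τ - 1)) (Ioo 0 1) :=
    aux_beta_integrable hτ (by linarith)
  have hIlt : ∫⁻ t in Ioo (0:ℝ) 1, ENNReal.ofReal (t ^ (τ - 1) * (1 - t) ^ (ω - τ - 1)) < ⊤ :=
    hbeta.lintegral_lt_top
  -- lintegral bound
  have hlint : ∑' n : ℕ, ∫⁻ t, ‖g n t‖₊ ∂(volume.restrict (Ioo (0:ℝ) 1)) ≠ ⊤ := by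
    have hstep : ∀ n : ℕ, ∫⁻ t, ‖g n t‖₊ ∂(volume.restrict (Ioo (0:ℝ) 1)) ≤
        ENNReal.ofReal (K n) *
          ∫⁻ t in Ioo (0:ℝ) 1, ENNReal.ofReal (t ^ (τ - 1) * (1 - t) ^ (ω - τ - 1)) := by
      intro n
      rw [← lintegral_const_mul' _ _ ENNReal.ofReal_ne_top]
      apply lintegral_mono_ae
      filter_upwards [ae_restrict_mem measurableSet_Ioo] with t ht
      have ht0 : (0:ℝ) < t := ht.1
      have ht1 : t < 1 := ht.2
      have hP1 : (0:ℝ) < t ^ (τ - 1) := Real.rpow_pos_of_pos ht0 _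
      have hP2 : (0:ℝ) < (1 - t) ^ (ω - τ - 1) := Real.rpow_pos_of_pos (by linarith) _
      have hEpos := Real.exp_pos (-p / t - q / (1 - t))
      have hE1 : Real.exp (-p / t - q / (1 - t)) ≤ 1 := by
        rw [Real.exp_le_one_iff]
        have d1 : 0 ≤ p / t := div_nonneg hp ht0.le
        have d2 : 0 ≤ q / (1 - t) := div_nonneg hq (by linarith)
        have d3 : -p / t = -(p / t) := by ring
        rw [d3]; linarith
      have hzp : |(z * t) ^ (n + 1)| ≤ 1 := by
        rw [abs_pow]
        apply pow_le_one₀ (abs_nonneg _)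
        rw [abs_mul]
        calc |z| * |t| ≤ 1 * 1 :=
              mul_le_mul hz (by rw [abs_of_pos ht0]; linarith) (abs_nonneg t) zero_le_one
          _ = 1 := by norm_num
      rw [← enorm_eq_nnnorm, ← ofReal_norm, ← ENNReal.ofReal_mul (hKpos n).le]
      apply ENNReal.ofReal_le_ofReal
      have habs : ‖g n t‖ = K n * (|(z * t) ^ (n + 1)| *
          (t ^ (τ - 1) * ((1 - t) ^ (ω - τ - 1) * Real.exp (-p / t - q / (1 - t))))) := by
        simp only [hgdef]
        rw [Real.norm_eq_abs, abs_mul, abs_mul, abs_of_pos (hKpos n),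
          abs_of_pos (show (0:ℝ) < t ^ (τ - 1) * (1 - t) ^ (ω - τ - 1) *
            Real.exp (-p / t - q / (1 - t)) from mul_pos (mul_pos hP1 hP2) hEpos)]
        ring
      rw [habs]
      apply mul_le_mul_of_nonneg_left _ (hKpos n).le
      calc |(z * t) ^ (n + 1)| *
            (t ^ (τ - 1) * ((1 - t) ^ (ω - τ - 1) * Real.exp (-p / t - q / (1 - t))))
          ≤ 1 * (t ^ (τ - 1) * ((1 - t) ^ (ω - τ - 1) * 1)) := by
            apply mul_le_mul hzp _ _ zero_le_one
            · exact mul_le_mul_of_nonneg_left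
                (mul_le_mul_of_nonneg_left hE1 hP2.le) hP1.le
            · exact mul_nonneg hP1.le (mul_nonneg hP2.le hEpos.le)
        _ = t ^ (τ - 1) * (1 - t) ^ (ω - τ - 1) := by ring
    have h2 : ∑' n : ℕ, ∫⁻ t, ‖g n t‖₊ ∂(volume.restrict (Ioo (0:ℝ) 1)) ≤
        (∑' n : ℕ, ENNReal.ofReal (K n)) *
          ∫⁻ t in Ioo (0:ℝ) 1, ENNReal.ofReal (t ^ (τ - 1) * (1 - t) ^ (ω - τ - 1)) := by
      rw [← ENNReal.tsum_mul_right]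
      exact ENNReal.tsum_le_tsum hstep
    refine ne_top_of_le_ne_top (ENNReal.mul_ne_top ?_ hIlt.ne) h2
    rw [← ENNReal.ofReal_tsum_of_nonneg (fun n => (hKpos n).le) hsumK]
    exact ENNReal.ofReal_ne_top
  -- key integral identity
  have hkey : ∀ n : ℕ, ∫ t in Ioo (0:ℝ) 1, g n t =
      K n * z ^ (n + 1) * betaPQ p q (τ + ((n:ℝ) + 1)) (ω - τ) := by
    intro n
    rw [betaPQ, ← MeasureTheory.integral_const_mul]
    refine setIntegral_congr_fun measurableSet_Ioo (fun t ht => ?_)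
    have ht0 : (0:ℝ) < t := ht.1
    have e : t ^ (τ + ((n:ℝ) + 1) - 1) = t ^ (τ - 1) * t ^ (n + 1) := by
      rw [← Real.rpow_natCast t (n + 1), ← Real.rpow_add ht0]
      congr 1
      push_cast; ring
    simp only [hgdef]
    rw [e, mul_pow]
    ring
  have hswap := MeasureTheory.integral_tsum hmeas hlint
  have step1 : mathieuPQ μ ν τ ω α β r p q z (fun k => Real.Gamma (θ * (k : ℝ) + σ) ^ γ)
      = ∑' n : ℕ, (1 / betaE τ (ω - τ)) * ∫ t in Ioo (0:ℝ) 1, g n t := by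
    rw [mathieuPQ]
    refine tsum_congr fun n => ?_
    rw [hkey n]
    simp only [hKdef, Nat.cast_add, Nat.cast_one]
    ring
  rw [step1, tsum_mul_left, ← hswap]
  congr 1
  refine integral_congr_ae (Filter.Eventually.of_forall fun t => ?_)
  simp only [mathieuC]
  rw [← tsum_mul_left]
  refine tsum_congr fun n => ?_
  simp only [hgdef, hKdef, Nat.cast_add, Nat.cast_one]
  ring
end
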